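/- Let b ≥ 2 be an integer and S a non-empty finite set of primes none of which divides b. Let X ⊆ ℤ_S ∩ [0,1) be an infinite set of S-integers. Then the set Orb_{T_b}(X) = {b^k x (mod 1) : x ∈ X, k ≥ 0} is dense in [0,1]. -/

import Mathlib

/-- The map `T_b : x ↦ bx (mod 1)`, i.e. the fractional part of `bx`. -/
noncomputable def Tb (b : ℕ) (x : ℝ) : ℝ := Int.fract ((b : ℝ) * x)


lemma v2_of_mod_four {m : ℕ} (hm : m % 4 = 2) : padicValNat 2 m = 1 := by
  have h2 : m = 2 * (m / 2) := by omega
  rw [h2, padicValNat.mul (by norm_num) (by omega)]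
  rw [padicValNat.self (by norm_num), padicValNat.eq_zero_of_not_dvd (by omega)]

lemma lte_two {t : ℕ} (ht : 2 ≤ t) (h4 : 4 ∣ t - 1) {d : ℕ} (hd : d ≠ 0) :
    padicValNat 2 (t ^ d - 1) = padicValNat 2 (t - 1) + padicValNat 2 d := by
  have ht4 : t % 4 = 1 := by omega
  have hodd : ¬ 2 ∣ t := by omega
  have heven : ∀ n : ℕ, n ≠ 0 → Even n →
      padicValNat 2 (t ^ n - 1) = padicValNat 2 (t - 1) + padicValNat 2 n := by
    intro n hn he
    have h2tv : padicValNat 2 (t + 1) = 1 := v2_of_mod_four (by omega)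
    have := padicValNat.pow_two_sub_pow (x := t) (y := 1) (by omega) (by omega) hodd hn he
    simp only [one_pow] at this
    omega
  rcases Nat.even_or_odd d with he | ho
  · exact heven d hd he
  · have hd2 : d % 2 = 1 := Nat.odd_iff.mp ho
    have hvd : padicValNat 2 d = 0 := padicValNat.eq_zero_of_not_dvd (by omega)
    have hv2d : padicValNat 2 (2 * d) = 1 := by
      rw [padicValNat.mul (by norm_num) hd, padicValNat.self (by norm_num), hvd]
    have htd : t ^ d % 4 = 1 := by
      have : t ^ d ≡ 1 ^ d [MOD 4] := Nat.ModEq.pow d (by unfold Nat.ModEq; omega)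
      simpa [Nat.ModEq, Nat.one_pow] using this
    have htd1 : 1 ≤ t ^ d := Nat.one_le_pow _ _ (by omega)
    have htd2 : 2 ≤ t ^ d := Nat.one_lt_pow hd (by omega)
    have hfac : t ^ (2 * d) - 1 = (t ^ d - 1) * (t ^ d + 1) := by
      have h1 : t ^ (2 * d) = t ^ d * t ^ d := by rw [two_mul, pow_add]
      rw [h1]
      apply Nat.sub_eq_of_eq_add
      obtain ⟨m, hm⟩ : ∃ m, t ^ d = m + 1 := ⟨t ^ d - 1, by omega⟩
      rw [hm]
      simp
      ring
    have hkey := heven (2 * d) (by omega) ⟨d, by ring⟩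
    rw [hfac, padicValNat.mul (by omega) (by omega), v2_of_mod_four (m := t ^ d + 1) (by omega), hv2d] at hkey
    omega

lemma lte_gen {p t : ℕ} (hp : p.Prime) (ht : 2 ≤ t) (hdvd : p ^ 2 ∣ t - 1) {d : ℕ} (hd : d ≠ 0) :
    padicValNat p (t ^ d - 1) = padicValNat p (t - 1) + padicValNat p d := by
  have hp1 : p ∣ t - 1 := dvd_trans (dvd_pow_self p (by norm_num)) hdvd
  have hpt : ¬ p ∣ t := by
    intro h
    have := Nat.dvd_sub h hp1
    rw [Nat.sub_sub_self (by omega)] at this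
    exact hp.one_lt.ne' (Nat.eq_one_of_dvd_one this ▸ rfl)
  rcases hp.eq_two_or_odd' with rfl | hoddp
  · exact lte_two ht (by simpa using hdvd) hd
  · haveI : Fact p.Prime := ⟨hp⟩
    have := padicValNat.pow_sub_pow (x := t) (y := 1) hoddp (by omega) (by simpa using hp1) hpt hd
    simpa using this


lemma ord_dvd {t q : ℕ} (ht : 2 ≤ t) (hq : q ≠ 0)
    (hS : ∀ p : ℕ, p.Prime → p ∣ q → p ^ 2 ∣ t - 1)
    {d : ℕ} (hd : d ≠ 0) (h : q ∣ t ^ d - 1) :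
    q / Nat.gcd q (t - 1) ∣ d := by
  have htne : t - 1 ≠ 0 := by omega
  have hMq : Nat.gcd q (t - 1) ∣ q := Nat.gcd_dvd_left _ _
  have hn0 : q / Nat.gcd q (t - 1) ≠ 0 := by
    have := Nat.div_pos (Nat.le_of_dvd (by omega) hMq) (Nat.pos_of_ne_zero (by
      intro h0
      exact hq (by simpa [h0] using Nat.eq_zero_of_gcd_eq_zero_left h0)))
    omega
  rw [← Nat.factorization_le_iff_dvd hn0 hd]
  rw [Nat.factorization_div hMq, Nat.factorization_gcd hq htne]
  intro p
  simp only [Finsupp.tsub_apply, Finsupp.inf_apply]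
  by_cases hp : p.Prime
  · set e := q.factorization p with he
    set c := (t - 1).factorization p with hc
    rcases le_or_gt e c with hle | hlt
    · simp [min_eq_left hle]
    · rw [min_eq_right hlt.le]
      -- p divides q, so p^2 | t - 1, c ≥ 2
      have hpq : p ∣ q := Nat.dvd_of_factorization_pos (by omega)
      have hc2 : 2 ≤ c := by
        rw [hc, Nat.factorization_def _ hp]
        have := hS p hp hpq
        rwa [Nat.Prime.pow_dvd_iff_le_factorization hp htne, Nat.factorization_def _ hp] at this
      have htd0 : t ^ d - 1 ≠ 0 := by
        have : 2 ≤ t ^ d := Nat.one_lt_pow hd (by omega)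
        omega
      have hev : e ≤ (t ^ d - 1).factorization p := by
        rw [← Nat.Prime.pow_dvd_iff_le_factorization hp htd0]
        exact dvd_trans (Nat.ordProj_dvd q p) h
      have hlte : (t ^ d - 1).factorization p = c + d.factorization p := by
        rw [Nat.factorization_def _ hp, Nat.factorization_def _ hp, hc,
          Nat.factorization_def _ hp]
        exact lte_gen hp ht (hS p hp hpq) hd
      omega
  · simp [Nat.factorization_eq_zero_of_not_prime _ hp]


lemma surj {t q : ℕ} (ht : 2 ≤ t) (hq : q ≠ 0) (hco : Nat.Coprime t q)
    (hS : ∀ p : ℕ, p.Prime → p ∣ q → p ^ 2 ∣ t - 1) (s : ℕ) :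
    ∃ j : ℕ, (t : ZMod q) ^ j = 1 + (Nat.gcd q (t - 1) : ZMod q) * (s : ZMod q) := by
  haveI : NeZero q := ⟨hq⟩
  set M := Nat.gcd q (t - 1) with hMdef
  have hMq : M ∣ q := Nat.gcd_dvd_left _ _
  have hM0 : M ≠ 0 := fun h0 => hq (by simpa [h0] using Nat.eq_zero_of_gcd_eq_zero_left h0)
  set n := q / M with hndef
  have hMn : M * n = q := Nat.mul_div_cancel' hMq
  have hn0 : n ≠ 0 := by
    intro h0
    rw [h0, Nat.mul_zero] at hMn
    exact hq hMn.symm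
  -- reduction mod n doesn't change M * s in ZMod q
  have hred : ∀ w : ℕ, ((M : ZMod q) * (w : ZMod q)) = (M : ZMod q) * ((w % n : ℕ) : ZMod q) := by
    intro w
    have hweq : M * w = M * (w % n) + q * (w / n) := by
      conv_lhs => rw [← Nat.div_add_mod w n]
      rw [Nat.mul_add, ← hMn]
      ring
    have : (M * w) ≡ M * (w % n) [MOD q] := by
      unfold Nat.ModEq
      rw [hweq, Nat.add_mul_mod_self_left]
    have := (ZMod.natCast_eq_natCast_iff _ _ _).mpr this
    push_cast at this
    rw [this]
  -- the two finsets
  set A := (Finset.range n).image (fun j => (t : ZMod q) ^ j) with hA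
  set B := (Finset.range n).image (fun s => (1 : ZMod q) + (M : ZMod q) * (s : ℕ)) with hB
  -- injectivity of powers of t
  have hpowinj : ∀ j ∈ Finset.range n, ∀ j' ∈ Finset.range n,
      (t : ZMod q) ^ j = (t : ZMod q) ^ j' → j = j' := by
    have key : ∀ j j', j < n → j' < n → j ≤ j' → (t : ZMod q) ^ j = (t : ZMod q) ^ j' → j = j' := by
      intro j j' hj hj' hle heq
      by_contra hne
      set d := j' - j with hd
      have hd0 : d ≠ 0 := by omega
      have hdn : d < n := by omega
      -- (t:ZMod q)^d = 1
      let u : (ZMod q)ˣ := ZMod.unitOfCoprime t hco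
      have hu : (u : ZMod q) = t := ZMod.coe_unitOfCoprime t hco
      have hueq : u ^ j = u ^ j' := by
        have : ((u ^ j : (ZMod q)ˣ) : ZMod q) = ((u ^ j' : (ZMod q)ˣ) : ZMod q) := by
          push_cast [hu]; exact heq
        exact Units.ext this
      have hud : u ^ d = 1 := by
        have : u ^ j * u ^ d = u ^ j * 1 := by
          rw [mul_one, ← pow_add, hd]
          rw [Nat.add_sub_cancel' hle]
          exact hueq.symm
        exact mul_left_cancel this
      have htd : (t : ZMod q) ^ d = 1 := by
        rw [← hu, ← Units.val_pow_eq_pow_val, hud, Units.val_one]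
      have hmod : t ^ d ≡ 1 [MOD q] := by
        rw [← ZMod.natCast_eq_natCast_iff]
        push_cast
        simpa using htd
      have hdvd : q ∣ t ^ d - 1 := (Nat.modEq_iff_dvd' (Nat.one_le_pow _ _ (by omega))).mp hmod.symm
      have := ord_dvd ht hq hS hd0 hdvd
      rw [← hndef] at this
      exact absurd (Nat.le_of_dvd (by omega) this) (by omega)
    intro j hj j' hj' heq
    simp only [Finset.mem_range] at hj hj'
    rcases le_total j j' with h | h
    · exact key j j' hj hj' h heq
    · exact (key j' j hj' hj h heq.symm).symm
  have hBinj : ∀ s ∈ Finset.range n, ∀ s' ∈ Finset.range n,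
      (1 : ZMod q) + (M : ZMod q) * (s : ℕ) = 1 + (M : ZMod q) * (s' : ℕ) → s = s' := by
    have key : ∀ s s', s < n → s' < n → s ≤ s' →
        (1 : ZMod q) + (M : ZMod q) * (s : ℕ) = 1 + (M : ZMod q) * (s' : ℕ) → s = s' := by
      intro s s' hs hs' hle heq
      have h1 : ((M * s : ℕ) : ZMod q) = ((M * s' : ℕ) : ZMod q) := by
        push_cast
        exact add_left_cancel heq
      have h2 : M * s ≡ M * s' [MOD q] := (ZMod.natCast_eq_natCast_iff _ _ _).mp h1
      have h3 : q ∣ M * s' - M * s := (Nat.modEq_iff_dvd' (Nat.mul_le_mul_left _ hle)).mp h2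
      rw [← Nat.mul_sub] at h3
      rw [← hMn] at h3
      have h4 : n ∣ s' - s := (mul_dvd_mul_iff_left (show (M:ℕ) ≠ 0 from hM0)).mp h3
      rcases Nat.eq_zero_or_pos (s' - s) with h5 | h5
      · omega
      · have := Nat.le_of_dvd h5 h4
        omega
    intro s hs s' hs' heq
    simp only [Finset.mem_range] at hs hs'
    rcases le_total s s' with h | h
    · exact key s s' hs hs' h heq
    · exact (key s' s hs' hs h heq.symm).symm
  have hcardA : A.card = n := by
    rw [hA, Finset.card_image_of_injOn, Finset.card_range]
    intro j hj j' hj' h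
    exact hpowinj j (Finset.mem_coe.mp hj) j' (Finset.mem_coe.mp hj') h
  have hcardB : B.card = n := by
    rw [hB, Finset.card_image_of_injOn, Finset.card_range]
    intro s hs s' hs' h
    exact hBinj s (Finset.mem_coe.mp hs) s' (Finset.mem_coe.mp hs') h
  have hAB : A ⊆ B := by
    intro x hx
    rw [hA, Finset.mem_image] at hx
    obtain ⟨j, hj, rfl⟩ := hx
    have hMj : M ∣ t ^ j - 1 := by
      refine dvd_trans (Nat.gcd_dvd_right q (t - 1)) ?_
      simpa using Nat.sub_dvd_pow_sub_pow t 1 j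
    obtain ⟨w, hw⟩ := hMj
    have hj1 : t ^ j = 1 + M * w := by
      have := Nat.one_le_pow j t (by omega)
      omega
    rw [hB, Finset.mem_image]
    refine ⟨w % n, Finset.mem_range.mpr (Nat.mod_lt _ (by omega)), ?_⟩
    rw [← hred w]
    have : ((t ^ j : ℕ) : ZMod q) = ((1 + M * w : ℕ) : ZMod q) := by rw [← hj1]
    push_cast at this
    rw [this]
  have hABeq : A = B := Finset.eq_of_subset_of_card_le hAB (by rw [hcardA, hcardB])
  have hmem : (1 : ZMod q) + (M : ZMod q) * ((s % n : ℕ) : ZMod q) ∈ A := by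
    rw [hABeq, hB, Finset.mem_image]
    exact ⟨s % n, Finset.mem_range.mpr (Nat.mod_lt _ (by omega)), rfl⟩
  rw [hA, Finset.mem_image] at hmem
  obtain ⟨j, _, hj⟩ := hmem
  exact ⟨j, by rw [hj, ← hred s]⟩

lemma exists_large_den (X : Set ℝ) (hX1 : X ⊆ Set.Ico 0 1) (hXinf : X.Infinite) (Q : ℕ) :
    ∃ x ∈ X, ∀ r : ℚ, (r : ℝ) = x → Q < r.den := by
  set G : Set ℚ := {r : ℚ | r.den ≤ Q ∧ 0 ≤ r ∧ r < 1} with hG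
  have hGfin : G.Finite := by
    apply Set.Finite.of_finite_image (f := fun r : ℚ => (r.num, r.den))
    · apply Set.Finite.subset (Set.finite_Icc ((0 : ℤ), 1) ((Q : ℤ), Q))
      rintro ⟨a, b⟩ ⟨r, hr, heq⟩
      obtain ⟨hden, hnn, hlt⟩ := hr
      have h1 : 0 ≤ r.num := Rat.num_nonneg.mpr hnn
      have h2 : r.num < r.den := Rat.num_lt_denom_iff.mpr hlt
      have h3 : 1 ≤ r.den := r.pos
      cases heq
      have hdQ : (r.den : ℤ) ≤ (Q : ℤ) := by exact_mod_cast hden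
      exact ⟨⟨h1, h3⟩, ⟨by omega, hden⟩⟩
    · intro r _ r' _ h
      simp only [Prod.mk.injEq] at h
      exact Rat.ext h.1 h.2
  have hFfin : ((fun r : ℚ => (r : ℝ)) '' G).Finite := hGfin.image _
  obtain ⟨x, hx⟩ := (hXinf.diff hFfin).nonempty
  refine ⟨x, hx.1, ?_⟩
  intro r hr
  by_contra hden
  push_neg at hden
  apply hx.2
  refine ⟨r, ⟨hden, ?_, ?_⟩, hr⟩
  · have : (0 : ℝ) ≤ (r : ℝ) := hr ▸ (hX1 hx.1).1
    exact_mod_cast this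
  · have : (r : ℝ) < 1 := hr ▸ (hX1 hx.1).2
    exact_mod_cast this



lemma fract_nat_div (m q : ℕ) (hq : q ≠ 0) :
    Int.fract ((m : ℝ) / q) = ((m % q : ℕ) : ℝ) / q := by
  have hq0 : (0 : ℝ) < q := by exact_mod_cast Nat.pos_of_ne_zero hq
  conv_lhs => rw [← Nat.div_add_mod m q]
  push_cast
  rw [add_div]
  have h1 : ((q : ℝ) * (↑(m / q))) / q = ((m / q : ℕ) : ℝ) := by
    field_simp
  rw [h1, Int.fract_natCast_add, Int.fract_eq_self.mpr ⟨by positivity, ?_⟩]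
  rw [div_lt_one hq0]
  exact_mod_cast Nat.mod_lt _ (Nat.pos_of_ne_zero hq)

set_option maxHeartbeats 1000000 in
theorem stmt15 (b : ℕ) (hb : 2 ≤ b) (S : Finset ℕ) (hS : S.Nonempty)
    (hSp : ∀ p ∈ S, Nat.Prime p ∧ ¬ p ∣ b)
    (X : Set ℝ) (hX1 : X ⊆ Set.Ico 0 1)
    (hX2 : ∀ x ∈ X, ∃ q : ℚ, (q : ℝ) = x ∧ ∀ p : ℕ, p.Prime → p ∣ q.den → p ∈ S)
    (hXinf : X.Infinite) :
    Set.Icc (0 : ℝ) 1 ⊆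
      closure {y : ℝ | ∃ x ∈ X, ∃ k : ℕ, y = Int.fract ((b : ℝ) ^ k * x)} := by
  intro y hy
  rw [Metric.mem_closure_iff]
  intro ε hε
  -- constants
  set K := (∏ p ∈ S, p) ^ 2 with hK
  have hKpos : 0 < K := pow_pos (Finset.prod_pos (fun p hp => (hSp p hp).1.pos)) 2
  have hbK : Nat.Coprime b K := by
    apply Nat.Coprime.pow_right
    apply Nat.Coprime.prod_right
    intro p hp
    exact (((hSp p hp).1.coprime_iff_not_dvd).mpr (hSp p hp).2).symm
  set N := Nat.totient K with hN
  have hN0 : N ≠ 0 := (Nat.totient_pos.mpr hKpos).ne'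
  set t := b ^ N with htdef
  have ht2 : 2 ≤ t := Nat.one_lt_pow hN0 (by omega)
  have htK : K ∣ t - 1 :=
    (Nat.modEq_iff_dvd' (by omega)).mp (Nat.ModEq.pow_totient hbK).symm
  set C := t - 1 with hC
  have hC1 : 1 ≤ C := by omega
  -- choose Q and the point x
  set Q := ⌈(C : ℝ) / ε⌉₊ with hQ
  obtain ⟨x, hxX, hxden⟩ := exists_large_den X hX1 hXinf Q
  obtain ⟨r, hrx, hrS⟩ := hX2 x hxX
  have hQden : Q < r.den := hxden r hrx
  set q := r.den with hqdef
  set a := r.num.toNat with hadef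
  have hq0 : q ≠ 0 := r.den_nz
  have hqpos : 0 < q := Nat.pos_of_ne_zero hq0
  have hx01 := hX1 hxX
  have hr0 : 0 ≤ r := by
    have : (0 : ℝ) ≤ (r : ℝ) := hrx ▸ hx01.1
    exact_mod_cast this
  have hr1 : r < 1 := by
    have : (r : ℝ) < 1 := hrx ▸ hx01.2
    exact_mod_cast this
  have hnum : (a : ℤ) = r.num := Int.toNat_of_nonneg (Rat.num_nonneg.mpr hr0)
  have haq : a < q := by
    have h2 : r.num < (r.den : ℤ) := Rat.num_lt_denom_iff.mpr hr1
    rw [← hnum] at h2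
    exact_mod_cast h2
  have hcop : Nat.Coprime a q := by
    have h1 := r.reduced
    have h2 : a = r.num.natAbs := by
      have := Int.natAbs_of_nonneg (Rat.num_nonneg.mpr hr0)
      omega
    rw [h2]
    exact h1
  have hxval : x = (a : ℝ) / q := by
    rw [← hrx, Rat.cast_def]
    rw [← hnum]
    push_cast
    rfl
  have hq2 : ∀ p : ℕ, p.Prime → p ∣ q → p ^ 2 ∣ C := by
    intro p hp hpq
    exact dvd_trans (pow_dvd_pow_of_dvd (Finset.dvd_prod_of_mem _ (hrS p hp hpq)) 2) htK
  have hcobq : Nat.Coprime b q := by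
    by_contra h
    obtain ⟨p, hp, hpd⟩ := Nat.exists_prime_and_dvd h
    have hpb : p ∣ b := hpd.trans (Nat.gcd_dvd_left _ _)
    have hpq : p ∣ q := hpd.trans (Nat.gcd_dvd_right _ _)
    exact (hSp p (hrS p hp hpq)).2 hpb
  have hcotq : Nat.Coprime t q := hcobq.pow_left N
  -- M and n
  set M := Nat.gcd q C with hM
  have hMq : M ∣ q := Nat.gcd_dvd_left _ _
  have hM0 : M ≠ 0 := fun h0 => hq0 (Nat.eq_zero_of_gcd_eq_zero_left h0)
  have hMpos : 0 < M := Nat.pos_of_ne_zero hM0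
  have hMC : M ≤ C := Nat.le_of_dvd (by omega) (Nat.gcd_dvd_right q C)
  set n := q / M with hn
  have hMn : M * n = q := Nat.mul_div_cancel' hMq
  have hn0 : n ≠ 0 := by
    intro h0
    rw [h0, Nat.mul_zero] at hMn
    exact hq0 hMn.symm
  have hnpos : 0 < n := Nat.pos_of_ne_zero hn0
  -- choose v and z
  set v := min ⌊y * (n : ℝ)⌋₊ (n - 1) with hv
  set r0 := a % M with hr0def
  set z := r0 + M * v with hz
  have hr0M : r0 < M := Nat.mod_lt _ hMpos
  have hvn : v ≤ n - 1 := min_le_right _ _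
  have hzq : z < q := by
    have h1 : M * v ≤ M * (n - 1) := Nat.mul_le_mul_left M hvn
    have h2 : M * (n - 1) + M = M * n := by
      have h5 : M * (n - 1 + 1) = M * n := by rw [Nat.sub_add_cancel hnpos]
      rw [Nat.mul_add, Nat.mul_one] at h5
      exact h5
    have h3 : z < M + M * (n - 1) := Nat.add_lt_add_of_lt_of_le hr0M h1
    have h4 : M + M * (n - 1) = q := by rw [Nat.add_comm, h2, hMn]
    exact h4 ▸ h3
  -- find u with a + M * u = z + q
  set A0 := a / M with hA0
  have hA0n : A0 ≤ n := Nat.div_le_div_right (le_of_lt haq)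
  set u := v + n - A0 with hu
  have hau : a + M * u = z + q := by
    have h1 : M * A0 + r0 = a := Nat.div_add_mod a M
    have h2 : A0 + u = v + n := by omega
    have h3 : M * A0 + M * u = M * v + M * n := by rw [← Nat.mul_add, h2, Nat.mul_add]
    calc a + M * u = (M * A0 + r0) + M * u := by rw [h1]
      _ = (M * A0 + M * u) + r0 := by ring
      _ = (M * v + M * n) + r0 := by rw [h3]
      _ = (r0 + M * v) + M * n := by ring
      _ = z + q := by rw [hMn]
  -- inverse of a mod n
  have hcan : Nat.Coprime a n := hcop.coprime_dvd_right (Nat.div_dvd_of_dvd hMq)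
  obtain ⟨a', haa'⟩ : ∃ a', a * a' ≡ 1 [MOD n] := by
    rcases eq_or_lt_of_le (Nat.one_le_iff_ne_zero.mpr hn0) with h1 | h1
    · exact ⟨0, by rw [← h1]; exact Nat.modEq_one⟩
    · obtain ⟨m, -, hm⟩ := Nat.exists_mul_mod_eq_one_of_coprime hcan h1
      exact ⟨m, by unfold Nat.ModEq; rw [hm, Nat.mod_eq_of_lt h1]⟩
  set s0 := a' * u with hs0def
  have hs0 : M * (a * s0) ≡ M * u [MOD q] := by
    have h1 : a * s0 ≡ u [MOD n] := by
      have h2 : a * s0 = (a * a') * u := by rw [hs0def]; ring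
      rw [h2]
      have := haa'.mul_right u
      simpa using this
    have := Nat.ModEq.mul_left' M h1
    rwa [hMn] at this
  obtain ⟨j, hj⟩ := surj ht2 hq0 hcotq hq2 s0
  have hjm : t ^ j ≡ 1 + M * s0 [MOD q] := by
    rw [← ZMod.natCast_eq_natCast_iff]
    push_cast
    exact hj
  set k := N * j with hk
  have hfin : b ^ k * a ≡ z [MOD q] := by
    have hbt : b ^ k = t ^ j := by rw [hk, htdef, pow_mul]
    have h5 : t ^ j * a ≡ (1 + M * s0) * a [MOD q] := hjm.mul_right a
    have h6 : (1 + M * s0) * a = a + M * (a * s0) := by ring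
    have h7 : a + M * (a * s0) ≡ a + M * u [MOD q] := hs0.add_left a
    have h8 : (z + q) ≡ z [MOD q] := by
      unfold Nat.ModEq
      rw [Nat.add_mod_right]
    calc b ^ k * a = t ^ j * a := by rw [hbt]
      _ ≡ (1 + M * s0) * a [MOD q] := h5
      _ = a + M * (a * s0) := h6
      _ ≡ a + M * u [MOD q] := h7
      _ = z + q := hau
      _ ≡ z [MOD q] := h8
  have hzres : (b ^ k * a) % q = z := by
    have := hfin
    unfold Nat.ModEq at this
    rw [this, Nat.mod_eq_of_lt hzq]
  -- real estimates
  have hqR : (0 : ℝ) < q := by exact_mod_cast hqpos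
  have hnR : (0 : ℝ) < n := by exact_mod_cast hnpos
  have hqMn : (q : ℝ) = (M : ℝ) * n := by exact_mod_cast hMn.symm
  have hv1 : (v : ℝ) ≤ y * n := by
    have h1 : (v : ℝ) ≤ (⌊y * (n : ℝ)⌋₊ : ℝ) := by
      exact_mod_cast min_le_left ⌊y * (n : ℝ)⌋₊ (n - 1)
    exact h1.trans (Nat.floor_le (mul_nonneg hy.1 (le_of_lt hnR)))
  have hv2 : y * n ≤ (v : ℝ) + 1 := by
    rcases le_or_gt ⌊y * (n : ℝ)⌋₊ (n - 1) with h | h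
    · have hveq : v = ⌊y * (n : ℝ)⌋₊ := min_eq_left h
      have h2 := Nat.lt_floor_add_one (y * (n : ℝ))
      rw [hveq]
      push_cast at h2 ⊢
      linarith
    · have hveq : v = n - 1 := min_eq_right (by omega)
      have h3 : y * n ≤ 1 * n := mul_le_mul_of_nonneg_right hy.2 (le_of_lt hnR)
      rw [hveq]
      rw [Nat.cast_sub hnpos]
      push_cast
      linarith
  have hz1 : (M : ℝ) * v ≤ z := by
    have : M * v ≤ z := by omega
    exact_mod_cast this
  have hz2 : (z : ℝ) ≤ (M : ℝ) * v + M - 1 := by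
    have h1 : z + 1 ≤ M * v + M := by omega
    have h2 : ((z + 1 : ℕ) : ℝ) ≤ ((M * v + M : ℕ) : ℝ) := by exact_mod_cast h1
    push_cast at h2
    linarith
  have habs : |y * q - z| ≤ M := by
    have hM0R : (0 : ℝ) ≤ M := by positivity
    have hp1 : y * (n : ℝ) * M ≤ ((v : ℝ) + 1) * M :=
      mul_le_mul_of_nonneg_right hv2 hM0R
    have hp2 : (v : ℝ) * M ≤ y * n * M :=
      mul_le_mul_of_nonneg_right hv1 hM0R
    rw [abs_le, hqMn]
    constructor
    · linarith only [hp2, hz2]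
    · linarith only [hp1, hz1]
  have hdist : |y - (z : ℝ) / q| ≤ (M : ℝ) / q := by
    have h1 : y - (z : ℝ) / q = (y * q - z) / q := by field_simp
    rw [h1, abs_div, abs_of_pos hqR]
    gcongr
  have hMCq : (M : ℝ) / q ≤ (C : ℝ) / q := by
    have hMCR : (M : ℝ) ≤ C := by exact_mod_cast hMC
    gcongr
  have hCq : (C : ℝ) / q < ε := by
    have h1 : (C : ℝ) / ε ≤ Q := Nat.le_ceil _
    have h2 : (Q : ℝ) < q := by exact_mod_cast hQden
    rw [div_lt_iff₀ hqR]
    have h3 : (C : ℝ) / ε < q := lt_of_le_of_lt h1 h2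
    rw [div_lt_iff₀ hε] at h3
    linarith
  -- the orbit point
  refine ⟨(z : ℝ) / q, ⟨x, hxX, k, ?_⟩, ?_⟩
  · rw [hxval]
    have h1 : (b : ℝ) ^ k * ((a : ℝ) / q) = ((b ^ k * a : ℕ) : ℝ) / q := by
      push_cast
      ring
    rw [h1, fract_nat_div _ _ hq0, hzres]
  · rw [Real.dist_eq]
    calc |y - (z : ℝ) / q| ≤ (M : ℝ) / q := hdist
      _ ≤ (C : ℝ) / q := hMCq
      _ < ε := hCq
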